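/- arXiv:2408.00330 — 3 statements merged into one kernel-verified Lean document; each statement's English description precedes it below -/
import Mathlib

section
/- Assume the 'No Harm, No Foul' property: for all decisions d, d' on a sensitive group A, d <_u d' implies d <_f d'. Then every unbiased decision d (Pareto maximal with respect to ≤_f on X) restricts on each sensitive group A to a decision d|_A that is Pareto maximal with respect to ≤_u on A. -/
open MeasureTheory Set

/-- A decision: a measurable map into the probability simplex. -/
def IsDecision {X : Type*} [MeasurableSpace X] (n : ℕ)
    (d : X → (Fin n → ℝ)) : Prop :=
  Measurable d ∧ ∀ x, d x ∈ stdSimplex ℝ (Fin n)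

/-- The Pareto preorder on a measurable subset `S`, induced by `p`. -/
def ParetoLEOn {X : Type*} [MeasurableSpace X] (μ : Measure X) (n : ℕ)
    (p : X → (Fin n → ℝ)) (S : Set X) (d d' : X → (Fin n → ℝ)) : Prop :=
  ∀ i : Fin n, ∫ x in S, d x i * p x i ∂μ ≤ ∫ x in S, d' x i * p x i ∂μ

/-- Strict Pareto domination on `S`. -/
def ParetoLTOn {X : Type*} [MeasurableSpace X] (μ : Measure X) (n : ℕ)
    (p : X → (Fin n → ℝ)) (S : Set X) (d d' : X → (Fin n → ℝ)) : Prop :=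
  ParetoLEOn μ n p S d d' ∧ ¬ ParetoLEOn μ n p S d' d

/-- Pareto maximality on `S`. -/
def ParetoMaxOn {X : Type*} [MeasurableSpace X] (μ : Measure X) (n : ℕ)
    (p : X → (Fin n → ℝ)) (S : Set X) (d : X → (Fin n → ℝ)) : Prop :=
  ∀ d' : X → (Fin n → ℝ), IsDecision n d' →
    ParetoLEOn μ n p S d d' → ParetoLEOn μ n p S d' d

/-- "No Harm, No Foul ⇒ Affirmative Action": under the No Harm, No Foul
assumption, every decision Pareto maximal for `≤_f` on `X` restricts on each
sensitive group to a decision Pareto maximal for `≤_u`. -/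
theorem no_harm_no_foul_implies_affirmative_action {X : Type*} [MeasurableSpace X]
    (μ : Measure X) [IsProbabilityMeasure μ] (n m : ℕ)
    (pu pf : X → (Fin n → ℝ)) (hpu : Measurable pu) (hpf : Measurable pf)
    (hpumem : ∀ x, pu x ∈ stdSimplex ℝ (Fin n))
    (hpfmem : ∀ x, pf x ∈ stdSimplex ℝ (Fin n))
    (A : Fin m → Set X) (hAmeas : ∀ k, MeasurableSet (A k))
    (hAcover : (⋃ k, A k) = univ)
    (hAdisj : Pairwise (Function.onFun Disjoint A))
    (hApos : ∀ k, 0 < μ (A k))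
    (hNHNF : ∀ k : Fin m, ∀ d d' : X → (Fin n → ℝ), IsDecision n d →
      IsDecision n d' → ParetoLTOn μ n pu (A k) d d' → ParetoLTOn μ n pf (A k) d d')
    (d : X → (Fin n → ℝ)) (hd : IsDecision n d)
    (hmax : ParetoMaxOn μ n pf univ d) :
    ∀ k : Fin m, ParetoMaxOn μ n pu (A k) d := by
  classical
  intro k d' hd' hle
  by_contra hnot
  have hlt : ParetoLTOn μ n pu (A k) d d' := ⟨hle, hnot⟩
  have hf := hNHNF k d d' hd hd' hlt
  -- coordinate bound
  have coord_le_one : ∀ (w : Fin n → ℝ), w ∈ stdSimplex ℝ (Fin n) → ∀ i, w i ≤ 1 := by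
    intro w hw i
    have := Finset.single_le_sum (f := w) (fun j _ => hw.1 j) (Finset.mem_univ i)
    simpa [hw.2] using this
  have hint : ∀ (g : X → Fin n → ℝ), IsDecision n g → ∀ i,
      Integrable (fun x => g x i * pf x i) μ := by
    intro g hg i
    refine (integrable_const (1:ℝ)).mono' ?_ ?_
    · exact (((measurable_pi_apply i).comp hg.1).mul
        ((measurable_pi_apply i).comp hpf)).aestronglyMeasurable
    · filter_upwards with x
      have h1 := (hg.2 x).1 i
      have h2 := (hpfmem x).1 i
      have h3 := coord_le_one _ (hg.2 x) i
      have h4 := coord_le_one _ (hpfmem x) i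
      rw [Real.norm_eq_abs, abs_of_nonneg (mul_nonneg h1 h2)]
      calc g x i * pf x i ≤ 1 * 1 := mul_le_mul h3 h4 h2 zero_le_one
        _ = 1 := one_mul 1
  set e := (A k).piecewise d' d with he_def
  have he : IsDecision n e := by
    constructor
    · exact Measurable.piecewise (hAmeas k) hd'.1 hd.1
    · intro x
      by_cases hx : x ∈ A k
      · simpa [he_def, Set.piecewise, hx] using hd'.2 x
      · simpa [he_def, Set.piecewise, hx] using hd.2 x
  -- integrals of e on A k equal those of d', off A k equal those of d
  have heA : ∀ i, ∫ x in A k, e x i * pf x i ∂μ = ∫ x in A k, d' x i * pf x i ∂μ := by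
    intro i
    refine setIntegral_congr_fun (hAmeas k) (fun x hx => ?_)
    simp [he_def, Set.piecewise, hx]
  have heAc : ∀ i, ∫ x in (A k)ᶜ, e x i * pf x i ∂μ = ∫ x in (A k)ᶜ, d x i * pf x i ∂μ := by
    intro i
    refine setIntegral_congr_fun (hAmeas k).compl (fun x hx => ?_)
    have hx' : x ∉ A k := hx
    simp [he_def, Set.piecewise, hx']
  have hsplit : ∀ (g : X → Fin n → ℝ) (hg : IsDecision n g) (i : Fin n),
      ∫ x in univ, g x i * pf x i ∂μ
        = ∫ x in A k, g x i * pf x i ∂μ + ∫ x in (A k)ᶜ, g x i * pf x i ∂μ := by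
    intro g hg i
    rw [setIntegral_univ]
    exact (integral_add_compl (hAmeas k) (hint g hg i)).symm
  have hde : ParetoLEOn μ n pf univ d e := by
    intro i
    rw [hsplit d hd i, hsplit e he i, heA i, heAc i]
    exact add_le_add (hf.1 i) le_rfl
  have hed := hmax e he hde
  apply hf.2
  intro i
  have := hed i
  rw [hsplit d hd i, hsplit e he i, heA i, heAc i] at this
  linarith
end

section
/- Assume the 'Fairness as Optimization' property: for all decisions d, d' on a sensitive group A, d <_f d' implies d <_u d'. Then every decision d that is Pareto maximal with respect to ≤_u on X restricts on each sensitive group A to a decision Pareto maximal with respect to ≤_f on A. -/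
open MeasureTheory Set

/-- "Fairness as Optimization ⇒ Double Standard": under the Fairness as
Optimization assumption, every decision Pareto maximal for `≤_u` on `X`
restricts on each sensitive group to a decision Pareto maximal for `≤_f`. -/
theorem fairness_as_optimization_implies_double_standard {X : Type*} [MeasurableSpace X]
    (μ : Measure X) [IsProbabilityMeasure μ] (n m : ℕ)
    (pu pf : X → (Fin n → ℝ)) (hpu : Measurable pu) (hpf : Measurable pf)
    (hpumem : ∀ x, pu x ∈ stdSimplex ℝ (Fin n))
    (hpfmem : ∀ x, pf x ∈ stdSimplex ℝ (Fin n))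
    (A : Fin m → Set X) (hAmeas : ∀ k, MeasurableSet (A k))
    (hAcover : (⋃ k, A k) = univ)
    (hAdisj : Pairwise (Function.onFun Disjoint A))
    (hApos : ∀ k, 0 < μ (A k))
    (hFaO : ∀ k : Fin m, ∀ d d' : X → (Fin n → ℝ), IsDecision n d →
      IsDecision n d' → ParetoLTOn μ n pf (A k) d d' → ParetoLTOn μ n pu (A k) d d')
    (d : X → (Fin n → ℝ)) (hd : IsDecision n d)
    (hmax : ParetoMaxOn μ n pu univ d) :
    ∀ k : Fin m, ParetoMaxOn μ n pf (A k) d := by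
  classical
  intro k d' hd' hle
  by_contra hnot
  have hlt_u : ParetoLTOn μ n pu (A k) d d' := hFaO k d d' hd hd' ⟨hle, hnot⟩
  set D : X → Fin n → ℝ := fun x => if x ∈ A k then d' x else d x with hDdef
  have hDdec : IsDecision n D := by
    constructor
    · exact Measurable.ite (hAmeas k) hd'.1 hd.1
    · intro x; by_cases h : x ∈ A k <;> simp [hDdef, h, hd'.2 x, hd.2 x]
  have hint : ∀ (e : X → Fin n → ℝ), IsDecision n e → ∀ i : Fin n,
      Integrable (fun x => e x i * pu x i) μ := by
    intro e he i
    have hm : Measurable fun x => e x i * pu x i :=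
      ((measurable_pi_apply i).comp he.1).mul ((measurable_pi_apply i).comp hpu)
    refine Integrable.mono' (integrable_const 1) hm.aestronglyMeasurable ?_
    filter_upwards with x
    have h1 := he.2 x
    have h2 := hpumem x
    have e1 : e x i ≤ 1 := by
      have := Finset.single_le_sum (fun j _ => h1.1 j) (Finset.mem_univ i)
      simpa [h1.2] using this
    have p1 : pu x i ≤ 1 := by
      have := Finset.single_le_sum (fun j _ => h2.1 j) (Finset.mem_univ i)
      simpa [h2.2] using this
    have h0 : 0 ≤ e x i * pu x i := mul_nonneg (h1.1 i) (h2.1 i)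
    have : e x i * pu x i ≤ 1 := by nlinarith [h1.1 i, h2.1 i]
    rw [Real.norm_eq_abs, abs_of_nonneg h0]; exact this
  have hsplit : ∀ (e : X → Fin n → ℝ), IsDecision n e → ∀ i : Fin n,
      ∫ x, e x i * pu x i ∂μ =
        (∫ x in A k, e x i * pu x i ∂μ) + ∫ x in (A k)ᶜ, e x i * pu x i ∂μ := by
    intro e he i
    exact (integral_add_compl (hAmeas k) (hint e he i)).symm
  have hDon : ∀ i : Fin n, (∫ x in A k, D x i * pu x i ∂μ) = ∫ x in A k, d' x i * pu x i ∂μ := by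
    intro i
    refine setIntegral_congr_fun (hAmeas k) fun x hx => ?_
    simp [hDdef, hx]
  have hDoff : ∀ i : Fin n,
      (∫ x in (A k)ᶜ, D x i * pu x i ∂μ) = ∫ x in (A k)ᶜ, d x i * pu x i ∂μ := by
    intro i
    refine setIntegral_congr_fun (hAmeas k).compl fun x hx => ?_
    simp [hDdef, (mem_compl_iff _ _).mp hx]
  have hle_univ : ParetoLEOn μ n pu univ d D := by
    intro i
    rw [setIntegral_univ, setIntegral_univ, hsplit d hd i, hsplit D hDdec i, hDon i, hDoff i]
    exact add_le_add_left (hlt_u.1 i) _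
  have hback := hmax D hDdec hle_univ
  apply hlt_u.2
  intro i
  have := hback i
  rw [setIntegral_univ, setIntegral_univ, hsplit d hd i, hsplit D hDdec i, hDon i, hDoff i] at this
  linarith
end

section
/- Suppose there exist i ∈ [n] and a positive-measure set S ⊆ X on which p_f(y_i|x) > 0 but p_u(y_i|x) = 0. Then there exists a decision d, Pareto maximal with respect to ≤_f, whose restriction to some sensitive group A with μ(A ∩ S) > 0 is not Pareto maximal with respect to ≤_u on A. In particular, the Affirmative Action assumption fails. -/
open MeasureTheory Set

open Classical in
noncomputable def pickMax {n : ℕ} (g : Fin n → ℝ) (i0 : Fin n) : Fin n :=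
  if h : ∃ j, ∀ k, g k ≤ g j then Fin.find (fun j => ∀ k, g k ≤ g j) h else i0

lemma pickMax_eq_iff {n : ℕ} (g : Fin n → ℝ) (i0 j : Fin n) :
    pickMax g i0 = j ↔ (∀ k, g k ≤ g j) ∧ ∀ k, (∀ k', g k' ≤ g k) → j ≤ k := by
  classical
  obtain ⟨j0, -, hj0⟩ := Finset.exists_max_image (Finset.univ : Finset (Fin n)) g
    ⟨i0, Finset.mem_univ _⟩
  unfold pickMax
  have hex : ∃ j, ∀ k, g k ≤ g j := ⟨j0, fun k => hj0 k (Finset.mem_univ k)⟩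
  rw [dif_pos hex, Fin.find_eq_iff]
  constructor
  · rintro ⟨h1, h2⟩; exact ⟨h1, fun k hk => not_lt.mp (fun hlt => h2 k hlt hk)⟩
  · rintro ⟨h1, h2⟩; exact ⟨h1, fun k hk hk' => absurd (h2 k hk') (not_le.mpr hk)⟩

lemma pickMax_spec {n : ℕ} (g : Fin n → ℝ) (i0 : Fin n) :
    ∀ k, g k ≤ g (pickMax g i0) :=
  ((pickMax_eq_iff g i0 (pickMax g i0)).mp rfl).1

lemma measurable_pickMax {X : Type*} [MeasurableSpace X] {n : ℕ} (g : X → Fin n → ℝ)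
    (hg : Measurable g) (i0 : Fin n) : Measurable (fun x => pickMax (g x) i0) := by
  apply measurable_to_countable'
  intro j
  have hgk : ∀ k : Fin n, Measurable fun x => g x k := fun k => (measurable_pi_apply k).comp hg
  have hE : (fun x => pickMax (g x) i0) ⁻¹' {j} =
      (⋂ k, {x | g x k ≤ g x j}) ∩ ⋂ k : Fin n, {x | (∀ k', g x k' ≤ g x k) → j ≤ k} := by
    ext x
    simp [pickMax_eq_iff]
  rw [hE]
  apply MeasurableSet.inter
  · exact MeasurableSet.iInter fun k => measurableSet_le (hgk k) (hgk j)
  · apply MeasurableSet.iInter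
    intro k
    by_cases hjk : j ≤ k
    · have : {x | (∀ k', g x k' ≤ g x k) → j ≤ k} = univ := by ext x; simp [hjk]
      rw [this]; exact MeasurableSet.univ
    · have : {x | (∀ k', g x k' ≤ g x k) → j ≤ k} = (⋂ k', {x | g x k' ≤ g x k})ᶜ := by
        ext x; simp [hjk]
      rw [this]
      exact (MeasurableSet.iInter fun k' => measurableSet_le (hgk k') (hgk k)).compl

lemma simplex_bounds {n : ℕ} {f : Fin n → ℝ} (hf : f ∈ stdSimplex ℝ (Fin n)) (j : Fin n) :
    0 ≤ f j ∧ f j ≤ 1 := by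
  refine ⟨hf.1 j, ?_⟩
  calc f j ≤ ∑ k, f k := Finset.single_le_sum (fun k _ => hf.1 k) (Finset.mem_univ j)
  _ = 1 := hf.2

lemma integrable_of_bdd {X : Type*} [MeasurableSpace X] {μ : Measure X} [IsFiniteMeasure μ]
    {f : X → ℝ} (hf : Measurable f) {C : ℝ} (hC : ∀ x, |f x| ≤ C) : Integrable f μ :=
  (integrable_const C).mono' hf.aestronglyMeasurable
    (Filter.Eventually.of_forall fun x => by simpa [Real.norm_eq_abs] using hC x)

lemma single_mem_simplex {n : ℕ} (j : Fin n) : Pi.single j (1:ℝ) ∈ stdSimplex ℝ (Fin n) := by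
  constructor
  · intro k; by_cases h : k = j <;> simp [Pi.single_apply, h]
  · rw [Finset.sum_eq_single j]
    · simp
    · intro k _ hk; simp [Pi.single_apply, hk]
    · simp

lemma sum_single_mul {n : ℕ} (j : Fin n) (h : Fin n → ℝ) :
    ∑ k, (Pi.single j (1:ℝ) : Fin n → ℝ) k * h k = h j := by
  rw [Finset.sum_eq_single j]
  · simp
  · intro k _ hk; simp [Pi.single_apply, hk]
  · simp

lemma measurable_single_comp {X : Type*} [MeasurableSpace X] {n : ℕ} {f : X → Fin n}
    (hf : Measurable f) : Measurable fun x => (Pi.single (f x) (1:ℝ) : Fin n → ℝ) := by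
  classical
  apply measurable_pi_lambda
  intro j
  have h1 : (fun x => (Pi.single (f x) (1:ℝ) : Fin n → ℝ) j) = fun x => if j = f x then (1:ℝ) else 0 := by
    funext x; rw [Pi.single_apply]
  rw [h1]
  have hset : MeasurableSet {x | j = f x} := by
    have h2 := hf (MeasurableSet.singleton j)
    convert h2 using 1
    ext x; simp [eq_comm]
  exact Measurable.ite hset measurable_const measurable_const

lemma sum_mul_le_max {n : ℕ} {c gg : Fin n → ℝ} (hc : c ∈ stdSimplex ℝ (Fin n)) (k : Fin n)
    (hk : ∀ j, gg j ≤ gg k) : ∑ j, c j * gg j ≤ gg k := by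
  calc ∑ j, c j * gg j ≤ ∑ j, c j * gg k :=
        Finset.sum_le_sum fun j _ => mul_le_mul_of_nonneg_left (hk j) (hc.1 j)
  _ = gg k := by rw [← Finset.sum_mul, hc.2, one_mul]
/-- If on a positive-measure set `S` some label has positive fair probability
but zero unfair probability, then some `≤_f`-maximal decision fails to be
`≤_u`-maximal on a sensitive group intersecting `S`: Affirmative Action fails. -/
theorem affirmative_action_fails_of_support_violation {X : Type*} [MeasurableSpace X]
    (μ : Measure X) [IsProbabilityMeasure μ] (n m : ℕ)
    (pu pf : X → (Fin n → ℝ)) (hpu : Measurable pu) (hpf : Measurable pf)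
    (hpumem : ∀ x, pu x ∈ stdSimplex ℝ (Fin n))
    (hpfmem : ∀ x, pf x ∈ stdSimplex ℝ (Fin n))
    (A : Fin m → Set X) (hAmeas : ∀ k, MeasurableSet (A k))
    (hAcover : (⋃ k, A k) = univ)
    (hAdisj : Pairwise (Function.onFun Disjoint A))
    (hApos : ∀ k, 0 < μ (A k))
    (i : Fin n) (S : Set X) (hSmeas : MeasurableSet S) (hSpos : 0 < μ S)
    (hS : ∀ x ∈ S, 0 < pf x i ∧ pu x i = 0) :
    ∃ d : X → (Fin n → ℝ), IsDecision n d ∧ ParetoMaxOn μ n pf univ d ∧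
      ∃ k : Fin m, 0 < μ (A k ∩ S) ∧ ¬ ParetoMaxOn μ n pu (A k) d := by
  classical
  have hn : 0 < n := i.pos
  have hpfj : ∀ j : Fin n, Measurable fun x => pf x j := fun j => (measurable_pi_apply j).comp hpf
  have hpuj : ∀ j : Fin n, Measurable fun x => pu x j := fun j => (measurable_pi_apply j).comp hpu
  -- Step A: find S' ⊆ S of positive measure where pf · i is bounded below
  obtain ⟨M, hM⟩ : ∃ M : ℕ, 0 < μ (S ∩ {x | 1/(M+1:ℝ) ≤ pf x i}) := by
    by_contra hcon
    push_neg at hcon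
    have h0 : ∀ M : ℕ, μ (S ∩ {x | 1/(M+1:ℝ) ≤ pf x i}) = 0 :=
      fun M => le_antisymm (hcon M) zero_le
    have hU : S ⊆ ⋃ M : ℕ, (S ∩ {x | 1/(M+1:ℝ) ≤ pf x i}) := by
      intro x hx
      obtain ⟨M, hM⟩ := exists_nat_one_div_lt (hS x hx).1
      refine mem_iUnion.mpr ⟨M, hx, ?_⟩
      show 1/(M+1:ℝ) ≤ pf x i
      exact_mod_cast hM.le
    have : μ S = 0 := measure_mono_null hU (measure_iUnion_null h0)
    exact absurd this hSpos.ne'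
  set S' : Set X := S ∩ {x | 1/(M+1:ℝ) ≤ pf x i} with hS'def
  have hS'meas : MeasurableSet S' := hSmeas.inter (measurableSet_le measurable_const (hpfj i))
  have hS'sub : S' ⊆ S := inter_subset_left
  have hS'pos : 0 < μ S' := hM
  -- weights and weighted probabilities
  set w : Fin n → ℝ := fun j => if j = i then (M+1:ℝ) else 1 with hwdef
  have hwpos : ∀ j, 0 < w j := by
    intro j; by_cases h : j = i <;> simp [hwdef, h] <;> positivity
  set g : X → Fin n → ℝ := fun x j => w j * pf x j with hgdef
  have hgmeas : Measurable g :=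
    measurable_pi_lambda _ fun j => measurable_const.mul (hpfj j)
  have hgmax : ∀ x ∈ S', ∀ j, g x j ≤ g x i := by
    intro x hx j
    by_cases h : j = i
    · subst h; exact le_refl _
    · have h1 : g x j = pf x j := by simp [hgdef, hwdef, h]
      have h3 : pf x j ≤ 1 := (simplex_bounds (hpfmem x) j).2
      have hMpos : (0:ℝ) < (M:ℝ)+1 := by positivity
      have h5 : 1/(M+1:ℝ) ≤ pf x i := hx.2
      have h4 : (1:ℝ) ≤ ((M:ℝ)+1) * pf x i := by
        rw [div_le_iff₀ hMpos] at h5; nlinarith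
      have h2 : g x i = ((M:ℝ)+1) * pf x i := by simp [hgdef, hwdef]
      rw [h1, h2]; linarith
  -- the decision d
  set fsel : X → Fin n := fun x => pickMax (g x) i with hfseldef
  have hfselmeas : Measurable fsel := measurable_pickMax g hgmeas i
  set idx : X → Fin n := fun x => if x ∈ S' then i else fsel x with hidxdef
  have hidxmeas : Measurable idx := Measurable.ite hS'meas measurable_const hfselmeas
  set d : X → Fin n → ℝ := fun x => (Pi.single (idx x) (1:ℝ) : Fin n → ℝ) with hddef
  have hddec : IsDecision n d :=
    ⟨measurable_single_comp hidxmeas, fun x => single_mem_simplex (idx x)⟩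
  have hidxmax : ∀ x, ∀ j, g x j ≤ g x (idx x) := by
    intro x j
    by_cases hx : x ∈ S'
    · simpa [hidxdef, hx] using hgmax x hx j
    · simpa [hidxdef, hx] using pickMax_spec (g x) i j
  have hidxS' : ∀ x ∈ S', idx x = i := by intro x hx; simp [hidxdef, hx]
  -- integrability helper
  have key_int : ∀ (d1 : X → Fin n → ℝ), IsDecision n d1 →
      ∀ (p : X → (Fin n → ℝ)), Measurable p → (∀ x, p x ∈ stdSimplex ℝ (Fin n)) →
      ∀ (T : Set X) (j : Fin n), IntegrableOn (fun x => d1 x j * p x j) T μ := by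
    intro d1 hd1 p hp hpmem T j
    apply integrable_of_bdd
      (((measurable_pi_apply j).comp hd1.1).mul ((measurable_pi_apply j).comp hp)) (C := 1)
    intro x
    have h1 := simplex_bounds (hd1.2 x) j
    have h2 := simplex_bounds (hpmem x) j
    show |d1 x j * p x j| ≤ 1
    rw [abs_mul, abs_of_nonneg h1.1, abs_of_nonneg h2.1]
    nlinarith
  -- Step D: d is Pareto maximal for pf on univ
  have hdmax : ParetoMaxOn μ n pf univ d := by
    intro d' hd' hle
    set a : Fin n → ℝ := fun j => ∫ x in univ, d x j * pf x j ∂μ with hadef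
    set b : Fin n → ℝ := fun j => ∫ x in univ, d' x j * pf x j ∂μ with hbdef
    have hab : ∀ j, a j ≤ b j := hle
    have e1 : ∀ (dd : X → Fin n → ℝ), IsDecision n dd →
        ∑ j, w j * (∫ x in univ, dd x j * pf x j ∂μ)
          = ∫ x in univ, (∑ j, dd x j * g x j) ∂μ := by
      intro dd hdd
      rw [integral_finset_sum _ (fun j _ => ?_)]
      · apply Finset.sum_congr rfl
        intro j _
        rw [← integral_const_mul]
        congr 1; funext x; simp [hgdef]; ring
      · have : (fun x => dd x j * g x j) = fun x => w j * (dd x j * pf x j) := by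
          funext x; simp [hgdef]; ring
        rw [this]
        exact (key_int dd hdd pf hpf hpfmem univ j).const_mul _
    have hsum : ∑ j, w j * b j ≤ ∑ j, w j * a j := by
      rw [hadef, hbdef, e1 d' hd', e1 d hddec]
      apply integral_mono
      · exact integrable_finset_sum _ (fun j _ => by
          have : (fun x => d' x j * g x j) = fun x => w j * (d' x j * pf x j) := by
            funext x; simp [hgdef]; ring
          rw [this]
          exact (key_int d' hd' pf hpf hpfmem univ j).const_mul _)
      · exact integrable_finset_sum _ (fun j _ => by
          have : (fun x => d x j * g x j) = fun x => w j * (d x j * pf x j) := by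
            funext x; simp [hgdef]; ring
          rw [this]
          exact (key_int d hddec pf hpf hpfmem univ j).const_mul _)
      · intro x
        have hL : ∑ j, d' x j * g x j ≤ g x (idx x) :=
          sum_mul_le_max (hd'.2 x) (idx x) (hidxmax x)
        have hR : ∑ j, d x j * g x j = g x (idx x) := by
          rw [hddef]; exact sum_single_mul (idx x) (g x)
        simpa [hR] using hL
    have hzero : ∀ j, b j = a j := by
      have h1 : ∑ j, w j * (b j - a j) ≤ 0 := by
        have : ∑ j, w j * (b j - a j) = ∑ j, w j * b j - ∑ j, w j * a j := by
          rw [← Finset.sum_sub_distrib]; apply Finset.sum_congr rfl; intros; ring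
        linarith
      have h2 : ∀ j ∈ Finset.univ, (0:ℝ) ≤ w j * (b j - a j) :=
        fun j _ => mul_nonneg (hwpos j).le (by linarith [hab j])
      have h3 := (Finset.sum_eq_zero_iff_of_nonneg h2).mp
        (le_antisymm h1 (Finset.sum_nonneg h2))
      intro j
      have := h3 j (Finset.mem_univ j)
      have hw' := (hwpos j).ne'
      have : b j - a j = 0 := by
        rcases mul_eq_zero.mp this with h | h
        · exact absurd h hw'
        · exact h
      linarith
    intro j
    exact (hzero j).le
  -- Step E: find the group k
  obtain ⟨k, hk⟩ : ∃ k, 0 < μ (A k ∩ S') := by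
    by_contra hcon
    push_neg at hcon
    have hcover : S' ⊆ ⋃ k, (A k ∩ S') := by
      intro x hx
      have hx2 : x ∈ ⋃ k, A k := hAcover ▸ mem_univ x
      obtain ⟨k, hkx⟩ := mem_iUnion.mp hx2
      exact mem_iUnion.mpr ⟨k, hkx, hx⟩
    have : μ S' = 0 := measure_mono_null hcover
      (measure_iUnion_null fun k => le_antisymm (hcon k) zero_le)
    exact absurd this hS'pos.ne'
  refine ⟨d, hddec, hdmax, k,
    lt_of_lt_of_le hk (measure_mono (inter_subset_inter_right _ hS'sub)), ?_⟩
  -- Step F: non-maximality for pu on A k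
  intro hmax
  set fsel' : X → Fin n := fun x => pickMax (pu x) i with hfsel'def
  have hfsel'meas : Measurable fsel' := measurable_pickMax pu hpu i
  set idx' : X → Fin n := fun x => if x ∈ S' then fsel' x else idx x with hidx'def
  have hidx'meas : Measurable idx' := Measurable.ite hS'meas hfsel'meas hidxmeas
  set d'' : X → Fin n → ℝ := fun x => (Pi.single (idx' x) (1:ℝ) : Fin n → ℝ) with hd''def
  have hd''dec : IsDecision n d'' :=
    ⟨measurable_single_comp hidx'meas, fun x => single_mem_simplex _⟩
  have hle : ParetoLEOn μ n pu (A k) d d'' := by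
    intro j
    apply setIntegral_mono_on (key_int d hddec pu hpu hpumem _ j)
      (key_int d'' hd''dec pu hpu hpumem _ j) (hAmeas k)
    intro x hx
    by_cases hxS : x ∈ S'
    · have hpu0 : pu x i = 0 := (hS x (hS'sub hxS)).2
      have hd0 : d x j * pu x j = 0 := by
        by_cases hj : j = i
        · subst hj; rw [hpu0]; ring
        · simp [hddef, hidxS' x hxS, Pi.single_apply, hj]
      rw [hd0]
      exact mul_nonneg (simplex_bounds (hd''dec.2 x) j).1 (simplex_bounds (hpumem x) j).1
    · have : idx' x = idx x := by simp [hidx'def, hxS]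
      show (Pi.single (idx x) (1:ℝ) : Fin n → ℝ) j * pu x j ≤ (Pi.single (idx' x) (1:ℝ) : Fin n → ℝ) j * pu x j
      rw [this]
  have hge := hmax d'' hd''dec hle
  -- contradiction via the sum
  have hFle : ∫ x in A k, (∑ j, (d'' x j * pu x j - d x j * pu x j)) ∂μ ≤ 0 := by
    rw [integral_finset_sum _ (fun j _ =>
      (show Integrable (fun x => d'' x j * pu x j - d x j * pu x j) (μ.restrict (A k)) from
        (key_int d'' hd''dec pu hpu hpumem (A k) j).sub (key_int d hddec pu hpu hpumem (A k) j)))]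
    apply Finset.sum_nonpos
    intro j _
    rw [integral_sub (key_int d'' hd''dec pu hpu hpumem (A k) j)
      (key_int d hddec pu hpu hpumem (A k) j)]
    linarith [hge j]
  have hnR : (0:ℝ) < n := by exact_mod_cast hn
  have hFge : (μ (S' ∩ A k)).toReal * (1/n)
      ≤ ∫ x in A k, (∑ j, (d'' x j * pu x j - d x j * pu x j)) ∂μ := by
    have hpoint : ∀ x, S'.indicator (fun _ => (1:ℝ)/n) x
        ≤ ∑ j, (d'' x j * pu x j - d x j * pu x j) := by
      intro x
      rw [Finset.sum_sub_distrib]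
      by_cases hxS : x ∈ S'
      · rw [indicator_of_mem hxS]
        have e1 : ∑ j, d'' x j * pu x j = pu x (fsel' x) := by
          have : idx' x = fsel' x := by simp [hidx'def, hxS]
          rw [hd''def]
          simpa [this] using sum_single_mul (idx' x) (pu x)
        have e2 : ∑ j, d x j * pu x j = 0 := by
          rw [hddef]
          have := sum_single_mul (idx x) (pu x)
          rw [this, hidxS' x hxS]
          exact (hS x (hS'sub hxS)).2
        rw [e1, e2, sub_zero]
        have hmax' := pickMax_spec (pu x) i
        have h1 : (1:ℝ) ≤ n * pu x (fsel' x) := by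
          calc (1:ℝ) = ∑ j, pu x j := (hpumem x).2.symm
          _ ≤ ∑ _j : Fin n, pu x (fsel' x) := Finset.sum_le_sum fun j _ => hmax' j
          _ = n * pu x (fsel' x) := by
            rw [Finset.sum_const, Finset.card_univ, Fintype.card_fin]; simp [nsmul_eq_mul]
        rw [div_le_iff₀ hnR]
        linarith
      · rw [indicator_of_notMem hxS]
        have h' : idx' x = idx x := by simp [hidx'def, hxS]
        show (0:ℝ) ≤ ∑ j, (Pi.single (idx' x) (1:ℝ) : Fin n → ℝ) j * pu x j
          - ∑ j, (Pi.single (idx x) (1:ℝ) : Fin n → ℝ) j * pu x j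
        rw [h']
        simp
    calc (μ (S' ∩ A k)).toReal * (1/n)
        = ∫ x in A k, S'.indicator (fun _ => (1:ℝ)/n) x ∂μ := by
          rw [setIntegral_indicator hS'meas, setIntegral_const, smul_eq_mul, inter_comm]; rfl
      _ ≤ _ := by
          apply integral_mono
          · exact (integrable_const _).indicator hS'meas
          · exact integrable_finset_sum _ (fun j _ =>
              ((key_int d'' hd''dec pu hpu hpumem (A k) j).sub
                (key_int d hddec pu hpu hpumem (A k) j)))
          · exact hpoint
  have hpos : 0 < (μ (S' ∩ A k)).toReal * (1/n) := by
    apply mul_pos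
    · exact ENNReal.toReal_pos (by rw [inter_comm]; exact hk.ne') (measure_ne_top μ _)
    · positivity
  linarith
end
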